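/- Let E : ℝ → ℝ be continuous and strictly increasing on [0, ∞), satisfy the Kneser difference equation E(x+1) = Real.exp (E x) for all x ≥ 0, and tend to +∞ as x → +∞. Then for every m ∈ ℕ and every real r > 0, E(x−r)^m / E(x) → 0 as x → +∞. -/

import Mathlib

open Filter

set_option maxHeartbeats 1000000 in
/-- For a continuous, strictly increasing solution of the Kneser difference
equation tending to `+∞`: for every `m : ℕ` and `r > 0`,
`E (x - r) ^ m / E x → 0` as `x → +∞`. -/
theorem kneser_shift_pow_div_tendsto_zero (E : ℝ → ℝ)
    (hcont : ContinuousOn E (Set.Ici (0 : ℝ)))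
    (hmono : StrictMonoOn E (Set.Ici (0 : ℝ)))
    (hK : ∀ x : ℝ, 0 ≤ x → E (x + 1) = Real.exp (E x))
    (htop : Tendsto E atTop atTop) :
    ∀ m : ℕ, ∀ r : ℝ, 0 < r →
      Tendsto (fun x : ℝ => E (x - r) ^ m / E x) atTop (nhds 0) := by
  intro m r hr
  -- choose b with E y ≥ 0 for all y ≥ b
  obtain ⟨b, hb⟩ := (htop.eventually_ge_atTop 0).exists_forall_of_atTop
  set a : ℝ := max b 0 + r with ha
  have har : 0 ≤ a - r := by simp [ha]
  have ha0 : 0 ≤ a := le_trans har (by linarith)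
  have hEpos : ∀ y : ℝ, a - r ≤ y → 0 ≤ E y := by
    intro y hy
    exact hb y (le_trans (le_max_left b 0) (by simpa [ha] using hy))
  -- min of δ on [a, a+1]
  have hδcont : ContinuousOn (fun y => E y - E (y - r)) (Set.Icc a (a + 1)) := by
    apply ContinuousOn.sub
    · exact hcont.comp continuousOn_id
        (fun y hy => by simp only [Set.mem_Ici, id]; linarith [hy.1])
    · exact hcont.comp ((continuous_id.sub continuous_const).continuousOn)
        (fun y hy => by simp only [Set.mem_Ici]; linarith [hy.1])
  obtain ⟨y₀, hy₀, hy₀min⟩ := (isCompact_Icc : IsCompact (Set.Icc a (a + 1))).exists_isMinOn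
    (Set.nonempty_Icc.mpr (by linarith)) hδcont
  set c : ℝ := E y₀ - E (y₀ - r) with hc
  have hcpos : 0 < c := by
    have h1 : (y₀ - r) ∈ Set.Ici (0:ℝ) := by
      have := hy₀.1; simp only [Set.mem_Ici]; linarith
    have h2 : y₀ ∈ Set.Ici (0:ℝ) := by
      have := hy₀.1; simp only [Set.mem_Ici]; linarith
    have := hmono h1 h2 (by linarith)
    linarith
  -- key exp inequality
  have expineq : ∀ A B : ℝ, A ≤ B → (B - A) * Real.exp A ≤ Real.exp B - Real.exp A := by
    intro A B hAB
    have h := Real.add_one_le_exp (B - A)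
    have h2 : (B - A + 1) * Real.exp A ≤ Real.exp (B - A) * Real.exp A :=
      mul_le_mul_of_nonneg_right h (Real.exp_nonneg A)
    rw [← Real.exp_add] at h2
    have : B - A + A = B := by ring
    rw [this] at h2
    nlinarith [Real.exp_nonneg A]
  -- δ ≥ c on [a+n, a+n+1]
  have step : ∀ n : ℕ, ∀ y : ℝ, a + n ≤ y → y ≤ a + n + 1 → c ≤ E y - E (y - r) := by
    intro n
    induction n with
    | zero => intro y h1 h2
              exact isMinOn_iff.mp hy₀min y ⟨by simpa using h1, by simpa using h2⟩
    | succ k ih =>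
      intro y h1 h2
      push_cast at h1 h2
      have hy1 : a + k ≤ y - 1 := by linarith
      have hy2 : y - 1 ≤ a + k + 1 := by linarith
      have hcast : (0:ℝ) ≤ k := Nat.cast_nonneg k
      have hy1r0 : 0 ≤ y - 1 - r := by linarith
      have hy10 : 0 ≤ y - 1 := by linarith
      have hEy : E y = Real.exp (E (y - 1)) := by
        have := hK (y - 1) hy10
        simpa using this
      have hEyr : E (y - r) = Real.exp (E (y - 1 - r)) := by
        have := hK (y - 1 - r) hy1r0
        have h : y - 1 - r + 1 = y - r := by ring
        rw [h] at this
        exact this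
      have hdiff := ih (y - 1) hy1 hy2
      have hA0 : (0:ℝ) ≤ E (y - 1 - r) := hEpos _ (by linarith)
      have hineq := expineq (E (y - 1 - r)) (E (y - 1)) (by linarith)
      have h1exp : (1:ℝ) ≤ Real.exp (E (y - 1 - r)) := Real.one_le_exp hA0
      have hyr : y - 1 - r = y - r - 1 := by ring
      rw [hEy, hEyr]
      nlinarith
  -- δ ≥ c for all y ≥ a
  have hδge : ∀ y : ℝ, a ≤ y → c ≤ E y - E (y - r) := by
    intro y hy
    have h0 : 0 ≤ y - a := by linarith
    have h1 : (⌊y - a⌋₊ : ℝ) ≤ y - a := Nat.floor_le h0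
    have h2 : y - a < ⌊y - a⌋₊ + 1 := Nat.lt_floor_add_one _
    exact step ⌊y - a⌋₊ y (by linarith) (by linarith)
  -- Lemma A : δ → ∞
  have lemA : Tendsto (fun y : ℝ => E y - E (y - r)) atTop atTop := by
    have hsub : Tendsto (fun y : ℝ => y - 1 - r) atTop atTop := by
      have h : (fun y : ℝ => y - 1 - r) = fun y : ℝ => y + (-1 - r) := by funext y; ring
      rw [h]; exact tendsto_atTop_add_const_right atTop _ tendsto_id
    have hE : Tendsto (fun y : ℝ => Real.exp (E (y - 1 - r))) atTop atTop :=
      Real.tendsto_exp_atTop.comp (htop.comp hsub)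
    have hcmul : Tendsto (fun y : ℝ => c * Real.exp (E (y - 1 - r))) atTop atTop :=
      Tendsto.const_mul_atTop hcpos hE
    apply tendsto_atTop_mono' atTop _ hcmul
    filter_upwards [eventually_ge_atTop (a + 1)] with y hy
    have hy10 : 0 ≤ y - 1 := by linarith
    have hy1r0 : 0 ≤ y - 1 - r := by linarith
    have hEy : E y = Real.exp (E (y - 1)) := by simpa using hK (y - 1) hy10
    have hEyr : E (y - r) = Real.exp (E (y - 1 - r)) := by
      have := hK (y - 1 - r) hy1r0
      have h : y - 1 - r + 1 = y - r := by ring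
      rwa [h] at this
    have hdiff := hδge (y - 1) (by linarith)
    have hineq := expineq (E (y - 1 - r)) (E (y - 1)) (by linarith)
    have hyr : y - 1 - r = y - r - 1 := by ring
    rw [hEy, hEyr]
    nlinarith [Real.exp_pos (E (y - 1 - r))]
  -- exponent → -∞
  have hexpnt : Tendsto (fun x : ℝ => (m : ℝ) * E (x - 1 - r) - E (x - 1)) atTop atBot := by
    have hsub2 : Tendsto (fun x : ℝ => x - 2) atTop atTop := by
      have h : (fun x : ℝ => x - 2) = fun x : ℝ => x + (-2) := by funext x; ring
      rw [h]; exact tendsto_atTop_add_const_right atTop _ tendsto_id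
    have hsub2r : Tendsto (fun x : ℝ => x - 2 - r) atTop atTop := by
      have h : (fun x : ℝ => x - 2 - r) = fun x : ℝ => x + (-2 - r) := by funext x; ring
      rw [h]; exact tendsto_atTop_add_const_right atTop _ tendsto_id
    have h1 : Tendsto (fun x : ℝ => Real.exp (E (x - 2 - r))) atTop atTop :=
      Real.tendsto_exp_atTop.comp (htop.comp hsub2r)
    have hE2 : Tendsto (fun x : ℝ => Real.exp (E (x - 2) - E (x - 2 - r))) atTop atTop := by
      apply Real.tendsto_exp_atTop.comp
      have := lemA.comp hsub2
      have heq : ((fun y : ℝ => E y - E (y - r)) ∘ fun x : ℝ => x - 2)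
          = fun x : ℝ => E (x - 2) - E (x - 2 - r) := by
        funext x; simp [Function.comp]
      rwa [heq] at this
    have h2 : Tendsto (fun x : ℝ => (m : ℝ) - Real.exp (E (x - 2) - E (x - 2 - r))) atTop atBot := by
      have h2' : Tendsto (fun x : ℝ => -Real.exp (E (x - 2) - E (x - 2 - r))) atTop atBot :=
        tendsto_neg_atTop_atBot.comp hE2
      have h2'' := tendsto_atBot_add_const_left atTop ((m : ℝ)) h2'
      simpa [sub_eq_add_neg] using h2''
    have hprod := h1.atTop_mul_atBot₀ h2
    apply Tendsto.congr' _ hprod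
    filter_upwards [eventually_ge_atTop (2 + r + a)] with x hx
    have hx20 : 0 ≤ x - 2 := by linarith
    have hx2r0 : 0 ≤ x - 2 - r := by linarith
    have hE1 : E (x - 1) = Real.exp (E (x - 2)) := by
      have := hK (x - 2) hx20
      have h : x - 2 + 1 = x - 1 := by ring
      rwa [h] at this
    have hE1r : E (x - 1 - r) = Real.exp (E (x - 2 - r)) := by
      have := hK (x - 2 - r) hx2r0
      have h : x - 2 - r + 1 = x - 1 - r := by ring
      rwa [h] at this
    rw [hE1, hE1r]
    rw [Real.exp_sub]
    field_simp
  -- conclude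
  have hfinal : Tendsto (fun x : ℝ => Real.exp ((m : ℝ) * E (x - 1 - r) - E (x - 1)))
      atTop (nhds 0) := Real.tendsto_exp_atBot.comp hexpnt
  apply Tendsto.congr' _ hfinal
  filter_upwards [eventually_ge_atTop (1 + r + a)] with x hx
  have hx10 : 0 ≤ x - 1 := by linarith
  have hx1r0 : 0 ≤ x - 1 - r := by linarith
  have hEx : E x = Real.exp (E (x - 1)) := by simpa using hK (x - 1) hx10
  have hExr : E (x - r) = Real.exp (E (x - 1 - r)) := by
    have := hK (x - 1 - r) hx1r0
    have h : x - 1 - r + 1 = x - r := by ring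
    rwa [h] at this
  rw [Real.exp_sub, Real.exp_nat_mul, hEx, hExr]
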